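/- Let V be a d×d positive definite real matrix, let X_1, …, X_n ∈ ℝ^d, and define V_t = V + Σ_{s=1}^t X_s X_sᵀ for t = 0, 1, …, n. Then log(det(V_n)/det(V)) ≤ Σ_{t=1}^n X_tᵀ V_{t-1}⁻¹ X_t. -/

import Mathlib

open Matrix

lemma outer_posSemidef {d : ℕ} (x : Fin d → ℝ) : (vecMulVec x x).PosSemidef := by
  refine PosSemidef.of_dotProduct_mulVec_nonneg ?_ ?_
  · ext i j; simp [vecMulVec_apply, Matrix.IsHermitian, mul_comm]
  · intro y
    have : dotProduct (star y) (vecMulVec x x *ᵥ y) = (x ⬝ᵥ y) * (x ⬝ᵥ y) := by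
      simp [dotProduct, mulVec, vecMulVec_apply, Finset.mul_sum, Finset.sum_mul, mul_comm,
        mul_left_comm]
    rw [this]
    exact mul_self_nonneg _

lemma det_step {d : ℕ} (A : Matrix (Fin d) (Fin d) ℝ) (hA : A.PosDef) (x : Fin d → ℝ) :
    (A + vecMulVec x x).det = A.det * (1 + x ⬝ᵥ (A⁻¹ *ᵥ x)) := by
  rw [vecMulVec_eq Unit, det_add_replicateCol_mul_replicateRow hA.det_pos.ne'.isUnit]
  congr 1
  rw [det_unique]
  have : ((1 + replicateRow Unit x * A⁻¹ * replicateCol Unit x : Matrix Unit Unit ℝ)) default default = 1 + x ⬝ᵥ (A⁻¹ *ᵥ x) := by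
    rw [Matrix.add_apply, Matrix.one_apply_eq, Matrix.mul_assoc, ← replicateCol_mulVec, replicateRow_mul_replicateCol_apply]
  rw [this]

/-- Elliptical-potential log-determinant bound:
`log (det Vₙ / det V) ≤ ∑ₜ Xₜᵀ Vₜ₋₁⁻¹ Xₜ`, where
`Vₜ = V + ∑_{s<t} X_s X_sᵀ` (vectors indexed from `0`). -/
theorem log_det_ratio_le_sum_quadratic {d : ℕ} (V : Matrix (Fin d) (Fin d) ℝ)
    (hV : V.PosDef) (n : ℕ) (X : ℕ → (Fin d → ℝ))
    (W : ℕ → Matrix (Fin d) (Fin d) ℝ)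
    (hW : ∀ t, W t = V + ∑ s ∈ Finset.range t, vecMulVec (X s) (X s)) :
    Real.log ((W n).det / V.det) ≤
      ∑ t ∈ Finset.range n, X t ⬝ᵥ ((W t)⁻¹ *ᵥ X t) := by
  have hWpd : ∀ t, (W t).PosDef := by
    intro t
    rw [hW t]
    refine hV.add_posSemidef ?_
    exact Finset.sum_induction _ _ (fun a b ha hb => ha.add hb) (Matrix.PosSemidef.zero)
      (fun s _ => outer_posSemidef (X s))
  have hq : ∀ t, 0 ≤ X t ⬝ᵥ ((W t)⁻¹ *ᵥ X t) := by
    intro t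
    have := ((hWpd t).inv.posSemidef).dotProduct_mulVec_nonneg (X t)
    simpa using this
  induction n with
  | zero => simp [hW 0, div_self hV.det_pos.ne']
  | succ n ih =>
    have hstep : (W (n + 1)).det = (W n).det * (1 + X n ⬝ᵥ ((W n)⁻¹ *ᵥ X n)) := by
      have : W (n + 1) = W n + vecMulVec (X n) (X n) := by
        rw [hW (n + 1), hW n, Finset.sum_range_succ, add_assoc]
      rw [this, det_step _ (hWpd n)]
    rw [Finset.sum_range_succ, hstep]
    have h1 : (0:ℝ) < 1 + X n ⬝ᵥ ((W n)⁻¹ *ᵥ X n) := by linarith [hq n]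
    have h2 : (0:ℝ) < (W n).det / V.det := div_pos (hWpd n).det_pos hV.det_pos
    rw [mul_comm, mul_div_assoc, Real.log_mul h1.ne' h2.ne']
    have := Real.log_le_sub_one_of_pos h1
    linarith
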